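/- Let p₁, p₂, p₃, p₄ be four points in the plane such that segments p₁p₂ and p₃p₄ cross, and let ℓ be any line. Then the number of segments among {p₁p₃, p₂p₄} crossed by ℓ is at most the number of segments among {p₁p₂, p₃p₄} crossed by ℓ, or the number of segments among {p₁p₄, p₂p₃} crossed by ℓ is at most the number of segments among {p₁p₂, p₃p₄} crossed by ℓ; in fact: for any flip, the total number of crossings of ℓ with the two inserted segments (either pair) never exceeds the number of crossings of ℓ with the two removed crossing segments. -/

import Mathlib

abbrev Plane := EuclideanSpace ℝ (Fin 2)

/-- Two segments cross: they intersect in exactly one point, which is interior to both. -/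
def SegCross (a b c d : Plane) : Prop :=
  ∃ x, segment ℝ a b ∩ segment ℝ c d = {x} ∧
    x ∈ openSegment ℝ a b ∧ x ∈ openSegment ℝ c d

/-- A set is a line if it is the affine span of two distinct points. -/
def IsLine (l : Set Plane) : Prop :=
  ∃ a b : Plane, a ≠ b ∧ l = (affineSpan ℝ ({a, b} : Set Plane) : Set Plane)

/-- A line crosses a segment: they meet at exactly one point, which is not an
endpoint of the segment. -/
def LineCross (l : Set Plane) (c d : Plane) : Prop :=
  ∃ x, l ∩ segment ℝ c d = {x} ∧ x ∈ openSegment ℝ c d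

open scoped Classical in
/-- Number of segments among the two given segments crossed by `l`. -/
noncomputable def pairCrossCount (l : Set Plane) (a b c d : Plane) : ℕ :=
  (if LineCross l a b then 1 else 0) + (if LineCross l c d then 1 else 0)


section LPNI

lemma lpni_ind_le (x y : ℝ) :
    ((if x*y<0 then 1 else 0 : ℕ)) ≤ (if x<0 then 1 else 0) + (if y<0 then 1 else 0) := by
  by_cases h : x*y < 0
  · rcases mul_neg_iff.1 h with ⟨_, hy⟩ | ⟨hx, _⟩
    · simp only [if_pos h, if_pos hy]; omega
    · simp only [if_pos h, if_pos hx]; omega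
  · simp [h]

lemma lpni_ind_eq (x y : ℝ) (H1 : x ≤ 0 → 0 < y) (H2 : y ≤ 0 → 0 < x) :
    ((if x*y<0 then 1 else 0 : ℕ)) = (if x<0 then 1 else 0) + (if y<0 then 1 else 0) := by
  by_cases hx : x < 0
  · have hy := H1 hx.le
    simp [hx, not_lt.2 hy.le, if_pos (mul_neg_of_neg_of_pos hx hy)]
  · by_cases hy : y < 0
    · have hx' := H2 hy.le
      simp [hx, hy, if_pos (mul_neg_of_pos_of_neg hx' hy)]
    · have h : ¬ x*y < 0 := not_lt.2 (mul_nonneg (not_lt.1 hx) (not_lt.1 hy))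
      simp [hx, hy, h]

lemma lpni_key_core (a b c d : ℝ) (Hab1 : a ≤ 0 → 0 < b) (Hab2 : b ≤ 0 → 0 < a)
    (Hcd1 : c ≤ 0 → 0 < d) (Hcd2 : d ≤ 0 → 0 < c) :
    ((if a*c<0 then 1 else 0) + (if b*d<0 then 1 else 0) : ℕ)
      ≤ (if a*b<0 then 1 else 0) + (if c*d<0 then 1 else 0) := by
  have h1 := lpni_ind_le a c
  have h2 := lpni_ind_le b d
  have e1 := lpni_ind_eq a b Hab1 Hab2
  have e2 := lpni_ind_eq c d Hcd1 Hcd2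
  omega

lemma lpni_key_half (a b c d t sa sc : ℝ) (hsa0 : 0 < sa) (hsa1 : sa < 1)
    (hsc0 : 0 < sc) (hsc1 : sc < 1)
    (ha : t = (1-sa)*a + sa*b) (hc : t = (1-sc)*c + sc*d) :
    ((if a*c<0 then 1 else 0) + (if b*d<0 then 1 else 0) : ℕ)
      ≤ (if a*b<0 then 1 else 0) + (if c*d<0 then 1 else 0) := by
  rcases lt_trichotomy t 0 with ht|ht|ht
  · have := lpni_key_core (-a) (-b) (-c) (-d)
      (by intro h; nlinarith) (by intro h; nlinarith)
      (by intro h; nlinarith) (by intro h; nlinarith)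
    simpa [neg_mul_neg] using this
  · subst ht
    by_cases hA : a = 0
    · have hB : b = 0 := by
        have : sa * b = 0 := by nlinarith
        rcases mul_eq_zero.1 this with h|h
        · exact absurd h (ne_of_gt hsa0)
        · exact h
      simp [hA, hB]
    · by_cases hC : c = 0
      · have hD : d = 0 := by
          have : sc * d = 0 := by nlinarith
          rcases mul_eq_zero.1 this with h|h
          · exact absurd h (ne_of_gt hsc0)
          · exact h
        simp [hC, hD]
      · have h0 : (1-sa)*(a*a) + sa*(a*b) = 0 := by linear_combination (-a) * ha
        have h1 : (1-sc)*(c*c) + sc*(c*d) = 0 := by linear_combination (-c) * hc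
        have hab : a*b < 0 := by nlinarith [mul_self_pos.mpr hA]
        have hcd : c*d < 0 := by nlinarith [mul_self_pos.mpr hC]
        rw [if_pos hab, if_pos hcd]
        split_ifs <;> omega
  · exact lpni_key_core a b c d (by intro h; nlinarith) (by intro h; nlinarith)
      (by intro h; nlinarith) (by intro h; nlinarith)

lemma lpni_key (a b c d t sa sc : ℝ) (hsa0 : 0 < sa) (hsa1 : sa < 1)
    (hsc0 : 0 < sc) (hsc1 : sc < 1)
    (ha : t = (1-sa)*a + sa*b) (hc : t = (1-sc)*c + sc*d) :
    (((if a*c<0 then 1 else 0) + (if b*d<0 then 1 else 0) : ℕ)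
      ≤ (if a*b<0 then 1 else 0) + (if c*d<0 then 1 else 0)) ∧
    (((if a*d<0 then 1 else 0) + (if b*c<0 then 1 else 0) : ℕ)
      ≤ (if a*b<0 then 1 else 0) + (if c*d<0 then 1 else 0)) := by
  constructor
  · exact lpni_key_half a b c d t sa sc hsa0 hsa1 hsc0 hsc1 ha hc
  · have := lpni_key_half a b d c t sa (1-sc) hsa0 hsa1 (by linarith) (by linarith) ha
      (by ring_nf; ring_nf at hc; linarith)
    simpa [mul_comm d c] using this

end LPNI

noncomputable def gfun (a b x : Plane) : ℝ :=
  (b 0 - a 0) * (x 1 - a 1) - (b 1 - a 1) * (x 0 - a 0)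

lemma plane_ext {u v : Plane} (h0 : u 0 = v 0) (h1 : u 1 = v 1) : u = v := by
  refine PiLp.ext fun i => ?_; fin_cases i <;> assumption

lemma gfun_affine (a b u v : Plane) (θ : ℝ) :
    gfun a b ((1-θ)•u + θ•v) = (1-θ) * gfun a b u + θ * gfun a b v := by
  simp only [gfun, PiLp.add_apply, PiLp.smul_apply, smul_eq_mul]
  ring

lemma mem_line_iff (a b : Plane) (hab : a ≠ b) (x : Plane) :
    x ∈ (affineSpan ℝ ({a,b} : Set Plane) : Set Plane) ↔ gfun a b x = 0 := by
  constructor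
  · intro hx
    have hd : x -ᵥ a ∈ (affineSpan ℝ ({a,b}:Set Plane)).direction :=
      AffineSubspace.vsub_mem_direction hx (left_mem_affineSpan_pair ℝ a b)
    rw [direction_affineSpan] at hd
    obtain ⟨r, hr⟩ := mem_vectorSpan_pair.1 hd
    have h0 : x 0 - a 0 = r * (a 0 - b 0) := by
      have := congrArg (fun w : Plane => w 0) hr
      simpa [PiLp.smul_apply, PiLp.sub_apply, smul_eq_mul] using this.symm
    have h1 : x 1 - a 1 = r * (a 1 - b 1) := by
      have := congrArg (fun w : Plane => w 1) hr
      simpa [PiLp.smul_apply, PiLp.sub_apply, smul_eq_mul] using this.symm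
    unfold gfun
    linear_combination (b 0 - a 0) * h1 - (b 1 - a 1) * h0
  · intro hg
    have hne : (b 0 - a 0) ≠ 0 ∨ (b 1 - a 1) ≠ 0 := by
      by_contra h
      push_neg at h
      exact hab (plane_ext (by linarith [h.1]) (by linarith [h.2])).symm
    have hden : 0 < (b 0 - a 0)^2 + (b 1 - a 1)^2 := by
      rcases hne with h|h <;> positivity
    unfold gfun at hg
    set r : ℝ := ((x 0 - a 0)*(b 0 - a 0)+(x 1 - a 1)*(b 1 - a 1)) /
      ((b 0 - a 0)^2 + (b 1 - a 1)^2) with hr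
    have key0 : x 0 - a 0 = r * (b 0 - a 0) := by
      rw [hr]
      field_simp
      linear_combination (-(b 1 - a 1)) * hg
    have key1 : x 1 - a 1 = r * (b 1 - a 1) := by
      rw [hr]
      field_simp
      linear_combination (b 0 - a 0) * hg
    have hv : x -ᵥ a ∈ vectorSpan ℝ ({a,b} : Set Plane) := by
      refine mem_vectorSpan_pair_rev.2 ⟨r, ?_⟩
      refine plane_ext ?_ ?_ <;>
        simp only [PiLp.smul_apply, PiLp.sub_apply, smul_eq_mul, vsub_eq_sub] <;>
        [linarith [key0]; linarith [key1]]
    have := AffineSubspace.vadd_mem_of_mem_direction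
      (by rw [direction_affineSpan]; exact hv) (left_mem_affineSpan_pair ℝ a b)
    simpa using this

lemma openSegment_param {u v x : Plane} (h : x ∈ openSegment ℝ u v) :
    ∃ θ : ℝ, 0 < θ ∧ θ < 1 ∧ x = (1-θ)•u + θ•v := by
  rw [openSegment_eq_image] at h
  obtain ⟨θ, ⟨h0, h1⟩, rfl⟩ := h
  exact ⟨θ, h0, h1, rfl⟩

lemma lineCross_iff (a b : Plane) (hab : a ≠ b) (c d : Plane) :
    LineCross (affineSpan ℝ ({a,b} : Set Plane) : Set Plane) c d ↔
      (gfun a b c * gfun a b d < 0 ∨ (c = d ∧ gfun a b c = 0)) := by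
  set l := (affineSpan ℝ ({a,b} : Set Plane) : Set Plane) with hl
  constructor
  · rintro ⟨x, hx, hxo⟩
    have hxl : x ∈ l ∧ x ∈ segment ℝ c d := by
      have : x ∈ l ∩ segment ℝ c d := hx ▸ rfl
      exact ⟨this.1, this.2⟩
    have hgx : gfun a b x = 0 := (mem_line_iff a b hab x).1 hxl.1
    obtain ⟨θ, hθ0, hθ1, hxe⟩ := openSegment_param hxo
    have heq : (1-θ) * gfun a b c + θ * gfun a b d = 0 := by
      rw [← gfun_affine, ← hxe, hgx]
    by_cases hcd : c = d
    · subst hcd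
      refine Or.inr ⟨rfl, ?_⟩
      have : x = c := by simpa [openSegment_same] using hxo
      rw [← this]; exact hgx
    · left
      by_contra hnot
      push_neg at hnot
      have hgc : gfun a b c = 0 := by
        rcases lt_trichotomy (gfun a b c) 0 with h|h|h
        · exfalso
          have hd : 0 < gfun a b d := by nlinarith
          nlinarith
        · exact h
        · exfalso
          have hd : gfun a b d < 0 := by nlinarith
          nlinarith
      have hgd : gfun a b d = 0 := by
        rw [hgc] at heq
        have h' : θ * gfun a b d = 0 := by linarith
        rcases mul_eq_zero.1 h' with h|h
        · exact absurd h (ne_of_gt hθ0)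
        · exact h
      have hcl : c ∈ l ∩ segment ℝ c d :=
        ⟨(mem_line_iff a b hab c).2 hgc, left_mem_segment ℝ c d⟩
      have hdl : d ∈ l ∩ segment ℝ c d :=
        ⟨(mem_line_iff a b hab d).2 hgd, right_mem_segment ℝ c d⟩
      rw [hx] at hcl hdl
      exact hcd (hcl.trans hdl.symm)
  · rintro (hprod | ⟨hcd', hc⟩)
    · have hgcd : gfun a b c ≠ gfun a b d := by
        intro h; rw [h] at hprod; nlinarith
      have hcd : c ≠ d := fun h => hgcd (h ▸ rfl)
      set C := gfun a b c
      set D := gfun a b d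
      set θ : ℝ := C / (C - D) with hθ
      have hCD : C - D ≠ 0 := sub_ne_zero.2 hgcd
      have hθ0 : 0 < θ := by
        rcases mul_neg_iff.1 hprod with ⟨h1, h2⟩ | ⟨h1, h2⟩
        · apply div_pos h1 (by linarith)
        · exact div_pos_of_neg_of_neg h1 (by linarith)
      have hθ1 : θ < 1 := by
        rw [hθ]
        rcases mul_neg_iff.1 hprod with ⟨h1, h2⟩ | ⟨h1, h2⟩
        · rw [div_lt_one (by linarith)]; linarith
        · rw [div_lt_one_of_neg (by linarith)]; linarith
      refine ⟨(1-θ)•c + θ•d, ?_, ?_⟩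
      · ext y
        simp only [Set.mem_inter_iff, Set.mem_singleton_iff]
        constructor
        · rintro ⟨hyl, hys⟩
          rw [segment_eq_image] at hys
          obtain ⟨s, ⟨hs0, hs1⟩, rfl⟩ := hys
          have h0 : (1-s) * C + s * D = 0 := by
            rw [← gfun_affine]
            exact (mem_line_iff a b hab _).1 hyl
          have hsθ : s = θ := by
            rw [hθ]
            field_simp
            linear_combination -h0
          rw [hsθ]
        · rintro rfl
          constructor
          · rw [hl, mem_line_iff a b hab, gfun_affine]
            rw [hθ]
            field_simp
            rw [show gfun a b c = C from rfl, show gfun a b d = D from rfl]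
            ring
          · rw [segment_eq_image]
            exact ⟨θ, ⟨hθ0.le, hθ1.le⟩, rfl⟩
      · rw [openSegment_eq_image]
        exact ⟨θ, ⟨hθ0, hθ1⟩, rfl⟩
    · subst hcd'
      refine ⟨c, ?_, by rw [openSegment_same]; exact rfl⟩
      rw [segment_same]
      ext y
      simp only [Set.mem_inter_iff, Set.mem_singleton_iff]
      constructor
      · rintro ⟨_, rfl⟩; rfl
      · rintro rfl
        exact ⟨(mem_line_iff a b hab _).2 hc, rfl⟩

open scoped Classical in
lemma cross_count_eq (a b : Plane) (hab : a ≠ b) {u v : Plane} (huv : u ≠ v) :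
    (if LineCross (affineSpan ℝ ({a,b} : Set Plane) : Set Plane) u v then (1:ℕ) else 0)
      = if gfun a b u * gfun a b v < 0 then 1 else 0 := by
  have h := lineCross_iff a b hab u v
  by_cases hc : gfun a b u * gfun a b v < 0
  · rw [if_pos hc, if_pos (h.2 (Or.inl hc))]
  · rw [if_neg hc, if_neg]
    intro hl'
    rcases h.1 hl' with h'|h'
    · exact hc h'
    · exact huv h'.1

open scoped Classical in
lemma cross_count_same (a b : Plane) (hab : a ≠ b) (u : Plane) :
    (if LineCross (affineSpan ℝ ({a,b} : Set Plane) : Set Plane) u u then (1:ℕ) else 0)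
      = if gfun a b u = 0 then 1 else 0 := by
  have h := lineCross_iff a b hab u u
  by_cases hc : gfun a b u = 0
  · rw [if_pos hc, if_pos (h.2 (Or.inr ⟨rfl, hc⟩))]
  · rw [if_neg hc, if_neg]
    intro hl'
    rcases h.1 hl' with h'|h'
    · exact absurd h' (not_lt.2 (mul_self_nonneg _))
    · exact hc h'.2

theorem line_potential_never_increases (p₁ p₂ p₃ p₄ : Plane) (l : Set Plane)
    (hl : IsLine l) (hcross : SegCross p₁ p₂ p₃ p₄) :
    pairCrossCount l p₁ p₃ p₂ p₄ ≤ pairCrossCount l p₁ p₂ p₃ p₄ ∧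
    pairCrossCount l p₁ p₄ p₂ p₃ ≤ pairCrossCount l p₁ p₂ p₃ p₄ := by
  obtain ⟨a, b, hab, rfl⟩ := hl
  obtain ⟨x, hint, h1, h2⟩ := hcross
  by_cases h12 : p₁ = p₂
  · subst h12
    have hx1 : x = p₁ := by simpa [openSegment_same] using h1
    by_cases h34 : p₃ = p₄
    · subst h34
      have hx3 : x = p₃ := by simpa [openSegment_same] using h2
      have h13 : p₁ = p₃ := hx1.symm.trans hx3
      subst h13
      exact ⟨le_rfl, le_rfl⟩
    · -- p₁ = p₂, p₃ ≠ p₄ ; x = p₁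
      have e13 : p₁ ≠ p₃ := by
        intro h
        have h2' := h2
        rw [hx1, h] at h2'
        exact h34 (left_mem_openSegment_iff.1 h2')
      have e14 : p₁ ≠ p₄ := by
        intro h
        have h2' := h2
        rw [hx1, h] at h2'
        exact h34 (right_mem_openSegment_iff.1 h2')
      obtain ⟨sc, hsc0, hsc1, hxc⟩ := openSegment_param h2
      set A := gfun a b p₁ with hA
      set C := gfun a b p₃ with hC
      set D := gfun a b p₄ with hD
      have htc : A = (1-sc) * C + sc * D := by
        rw [hA, hC, hD, ← hx1, hxc]; exact gfun_affine a b p₃ p₄ sc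
      have hk1 := lpni_key_half A A C D A (1/2) sc (by norm_num) (by norm_num)
        hsc0 hsc1 (by ring) htc
      have hk2 := lpni_key_half A A D C A (1/2) (1-sc) (by norm_num) (by norm_num)
        (by linarith) (by linarith) (by ring) (by linear_combination htc)
      have hAA : (if A*A < 0 then (1:ℕ) else 0) = 0 :=
        if_neg (not_lt.2 (mul_self_nonneg _))
      have hDC : (if D*C < 0 then (1:ℕ) else 0) = (if C*D < 0 then 1 else 0) := by
        rw [mul_comm]
      unfold pairCrossCount
      rw [cross_count_eq a b hab e13, cross_count_eq a b hab e14,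
        cross_count_same a b hab, cross_count_eq a b hab h34]
      rw [← hA, ← hC, ← hD]
      constructor <;> [skip; skip] <;>
      · have hz : (0:ℕ) ≤ if A = 0 then 1 else 0 := Nat.zero_le _
        omega
  · by_cases h34 : p₃ = p₄
    · subst h34
      have hx3 : x = p₃ := by simpa [openSegment_same] using h2
      have e13 : p₁ ≠ p₃ := by
        intro h
        have h1' := h1
        rw [hx3, ← h] at h1'
        exact h12 (left_mem_openSegment_iff.1 h1')
      have e23 : p₂ ≠ p₃ := by
        intro h
        have h1' := h1
        rw [hx3, ← h] at h1'
        exact h12 (right_mem_openSegment_iff.1 h1')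
      obtain ⟨sa, hsa0, hsa1, hxa⟩ := openSegment_param h1
      set A := gfun a b p₁ with hA
      set B := gfun a b p₂ with hB
      set C := gfun a b p₃ with hC
      have hta : C = (1-sa) * A + sa * B := by
        rw [hA, hB, hC, ← hx3, hxa]; exact gfun_affine a b p₁ p₂ sa
      have hk1 := lpni_key_half A B C C C sa (1/2) hsa0 hsa1 (by norm_num)
        (by norm_num) hta (by ring)
      have hCC : (if C*C < 0 then (1:ℕ) else 0) = 0 :=
        if_neg (not_lt.2 (mul_self_nonneg _))
      unfold pairCrossCount
      rw [cross_count_eq a b hab e13, cross_count_eq a b hab e23,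
        cross_count_same a b hab, cross_count_eq a b hab h12]
      rw [← hA, ← hB, ← hC]
      constructor <;>
      · have hz : (0:ℕ) ≤ if C = 0 then 1 else 0 := Nat.zero_le _
        omega
    · -- main nondegenerate case
      have mem_eq : ∀ y : Plane, y ∈ segment ℝ p₁ p₂ → y ∈ segment ℝ p₃ p₄ → y = x := by
        intro y hy1 hy2
        have : y ∈ segment ℝ p₁ p₂ ∩ segment ℝ p₃ p₄ := ⟨hy1, hy2⟩
        rwa [hint] at this
      have e13 : p₁ ≠ p₃ := by
        intro h
        have := mem_eq p₁ (left_mem_segment ℝ p₁ p₂) (by rw [h]; exact left_mem_segment ℝ p₃ p₄)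
        rw [← this] at h1
        exact h12 (left_mem_openSegment_iff.1 h1)
      have e14 : p₁ ≠ p₄ := by
        intro h
        have := mem_eq p₁ (left_mem_segment ℝ p₁ p₂) (by rw [h]; exact right_mem_segment ℝ p₃ p₄)
        rw [← this] at h1
        exact h12 (left_mem_openSegment_iff.1 h1)
      have e24 : p₂ ≠ p₄ := by
        intro h
        have := mem_eq p₂ (right_mem_segment ℝ p₁ p₂) (by rw [h]; exact right_mem_segment ℝ p₃ p₄)
        rw [← this] at h1
        exact h12 (right_mem_openSegment_iff.1 h1)
      have e23 : p₂ ≠ p₃ := by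
        intro h
        have := mem_eq p₂ (right_mem_segment ℝ p₁ p₂) (by rw [h]; exact left_mem_segment ℝ p₃ p₄)
        rw [← this] at h1
        exact h12 (right_mem_openSegment_iff.1 h1)
      obtain ⟨sa, hsa0, hsa1, hxa⟩ := openSegment_param h1
      obtain ⟨sc, hsc0, hsc1, hxc⟩ := openSegment_param h2
      have hta : gfun a b x = (1-sa) * gfun a b p₁ + sa * gfun a b p₂ := by
        rw [hxa]; exact gfun_affine a b p₁ p₂ sa
      have htc : gfun a b x = (1-sc) * gfun a b p₃ + sc * gfun a b p₄ := by
        rw [hxc]; exact gfun_affine a b p₃ p₄ sc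
      unfold pairCrossCount
      rw [cross_count_eq a b hab e13, cross_count_eq a b hab e24,
        cross_count_eq a b hab e14, cross_count_eq a b hab e23,
        cross_count_eq a b hab h12, cross_count_eq a b hab h34]
      exact lpni_key (gfun a b p₁) (gfun a b p₂) (gfun a b p₃) (gfun a b p₄)
        (gfun a b x) sa sc hsa0 hsa1 hsc0 hsc1 hta htc
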